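/- arXiv:2511.01432 — 3 statements merged into one kernel-verified Lean document; each statement's English description precedes it below -/
import Mathlib

section
/- Let w ∈ ℝ³ be a constant vector and define u : ℝ³ → ℝ³ by u(x) = 3(1+|x|²)^{-2}((1-|x|²)w + 2(w·x)x + 2 w×x). Then ∇×u(x) = 4(1+|x|²)^{-1} u(x) for all x ∈ ℝ³. -/
noncomputable section
open MeasureTheory Real
open scoped BigOperators

/-- `ℝ³` with the Euclidean norm. -/
abbrev E3 : Type := EuclideanSpace ℝ (Fin 3)

/-- Build a vector of `E3` from components. -/
def toE3 (f : Fin 3 → ℝ) : E3 := (WithLp.equiv 2 (Fin 3 → ℝ)).symm f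

/-- Euclidean inner product on `ℝ³`. -/
def ip (a b : E3) : ℝ := @inner ℝ _ _ a b

/-- `i`-th partial derivative of a scalar function on `ℝ³`. -/
def pd (i : Fin 3) (f : E3 → ℝ) (x : E3) : ℝ :=
  fderiv ℝ f x (EuclideanSpace.single i 1)

/-- The curl `∇×v` of a vector field on `ℝ³`. -/
def curl (v : E3 → E3) (x : E3) : E3 :=
  toE3 ![pd 1 (fun y => v y 2) x - pd 2 (fun y => v y 1) x,
        pd 2 (fun y => v y 0) x - pd 0 (fun y => v y 2) x,
        pd 0 (fun y => v y 1) x - pd 1 (fun y => v y 0) x]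

/-- The divergence of a vector field on `ℝ³`. -/
def div3 (v : E3 → E3) (x : E3) : ℝ :=
  pd 0 (fun y => v y 0) x + pd 1 (fun y => v y 1) x + pd 2 (fun y => v y 2) x

/-- The cross product on `ℝ³`. -/
def cross3 (a b : E3) : E3 :=
  toE3 (crossProduct (WithLp.equiv 2 (Fin 3 → ℝ) a) (WithLp.equiv 2 (Fin 3 → ℝ) b))

/-- Squared Frobenius norm `|∇v|²` of the Jacobian of a vector field. -/
def jacNormSq (v : E3 → E3) (x : E3) : ℝ :=
  ∑ i : Fin 3, ∑ j : Fin 3, (pd i (fun y => v y j) x) ^ 2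

/-- The Loss–Yau field `u(x) = 3(1+|x|²)⁻²((1-|x|²)w + 2(w·x)x + 2 w×x)`. -/
def uLY (w : E3) (x : E3) : E3 :=
  (3 * ((1 + ‖x‖ ^ 2) ^ 2)⁻¹) •
    ((1 - ‖x‖ ^ 2) • w + (2 * ip w x) • x + (2 : ℝ) • cross3 w x)

lemma toE3_apply (f : Fin 3 → ℝ) (j : Fin 3) : toE3 f j = f j := rfl

lemma normsq_eq (x : E3) : ‖x‖^2 = x 0^2 + x 1^2 + x 2^2 := by
  rw [EuclideanSpace.norm_eq, Real.sq_sqrt (by positivity)]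
  simp [Fin.sum_univ_three]

lemma ip_eq (a b : E3) : ip a b = a 0 * b 0 + a 1 * b 1 + a 2 * b 2 := by
  simp [ip, PiLp.inner_apply, Fin.sum_univ_three]
  ring

lemma cross3_apply (a b : E3) (j : Fin 3) :
    cross3 a b j = a (j+1) * b (j+2) - a (j+2) * b (j+1) := by
  fin_cases j <;> simp [cross3, toE3, crossProduct]

lemma coord_diff (k : Fin 3) (x : E3) : DifferentiableAt ℝ (fun y : E3 => y k) x :=
  (EuclideanSpace.proj (𝕜 := ℝ) k).differentiableAt

lemma uLY_coord (w y : E3) (j : Fin 3) :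
    uLY w y j = 3 * ((1 + (y 0^2+y 1^2+y 2^2))^2)⁻¹ *
      ((1 - (y 0^2+y 1^2+y 2^2)) * w j + 2*(w 0*y 0+w 1*y 1+w 2*y 2)*(y j)
        + 2*(w (j+1)*y (j+2) - w (j+2)*y (j+1))) := by
  simp only [uLY, PiLp.smul_apply, PiLp.add_apply, smul_eq_mul, normsq_eq, ip_eq, cross3_apply]
  try ring

lemma uLY_diff (w x : E3) (j : Fin 3) : DifferentiableAt ℝ (fun y => uLY w y j) x := by
  have hne : ((1 + (x 0^2+x 1^2+x 2^2))^2 : ℝ) ≠ 0 := by positivity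
  have h0 := coord_diff 0 x; have h1 := coord_diff 1 x; have h2 := coord_diff 2 x
  have hj := coord_diff j x; have hj1 := coord_diff (j+1) x; have hj2 := coord_diff (j+2) x
  have hQ : DifferentiableAt ℝ (fun y : E3 => y 0^2+y 1^2+y 2^2) x :=
    ((h0.pow 2).add (h1.pow 2)).add (h2.pow 2)
  simp only [uLY_coord]
  refine DifferentiableAt.mul ((((hQ.const_add 1).pow 2).inv hne).const_mul 3) ?_
  refine DifferentiableAt.add (DifferentiableAt.add ?_ ?_) ?_
  · exact (hQ.const_sub 1).mul_const _
  · exact ((((h0.const_mul (w 0)).add (h1.const_mul (w 1))).add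
      (h2.const_mul (w 2))).const_mul 2).mul hj
  · exact ((hj2.const_mul (w (j+1))).sub (hj1.const_mul (w (j+2)))).const_mul 2

lemma lin_hasDeriv (c d : ℝ) : HasDerivAt (fun t : ℝ => c + t * d) d 0 := by
  simpa using ((hasDerivAt_id (0:ℝ)).mul_const d).const_add c

lemma master (x0 x1 x2 d0 d1 d2 w0 w1 w2 wj xj dj a xa da b xb db : ℝ) :
    HasDerivAt (fun t : ℝ =>
      3 * ((1 + ((x0+t*d0)^2+(x1+t*d1)^2+(x2+t*d2)^2))^2)⁻¹ *
        ((1 - ((x0+t*d0)^2+(x1+t*d1)^2+(x2+t*d2)^2)) * wj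
          + 2 * (w0*(x0+t*d0)+w1*(x1+t*d1)+w2*(x2+t*d2)) * (xj+t*dj)
          + 2 * (a*(xa+t*da) - b*(xb+t*db))))
      (3 * (-(2*(1+(x0^2+x1^2+x2^2))*(2*(x0*d0+x1*d1+x2*d2))) / ((1+(x0^2+x1^2+x2^2))^2)^2)
          * ((1-(x0^2+x1^2+x2^2))*wj + 2*(w0*x0+w1*x1+w2*x2)*xj + 2*(a*xa-b*xb))
        + 3 * ((1+(x0^2+x1^2+x2^2))^2)⁻¹
          * ((-(2*(x0*d0+x1*d1+x2*d2)))*wj + 2*((w0*d0+w1*d1+w2*d2)*xj + (w0*x0+w1*x1+w2*x2)*dj)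
            + 2*(a*da - b*db))) 0 := by
  have hQ : HasDerivAt (fun t : ℝ => (x0+t*d0)^2+(x1+t*d1)^2+(x2+t*d2)^2)
      (2*(x0*d0+x1*d1+x2*d2)) 0 := by
    have h := (((lin_hasDeriv x0 d0).pow 2).add ((lin_hasDeriv x1 d1).pow 2)).add
      ((lin_hasDeriv x2 d2).pow 2)
    refine h.congr_deriv ?_
    push_cast
    ring
  have hden : HasDerivAt (fun t : ℝ => ((1 + ((x0+t*d0)^2+(x1+t*d1)^2+(x2+t*d2)^2))^2)⁻¹)
      (-(2*(1+(x0^2+x1^2+x2^2))*(2*(x0*d0+x1*d1+x2*d2))) / ((1+(x0^2+x1^2+x2^2))^2)^2) 0 := by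
    have h1 : HasDerivAt (fun t : ℝ => (1 + ((x0+t*d0)^2+(x1+t*d1)^2+(x2+t*d2)^2))^2)
        (2*(1+(x0^2+x1^2+x2^2))*(2*(x0*d0+x1*d1+x2*d2))) 0 := by
      have h := (hQ.const_add 1).pow 2
      refine h.congr_deriv ?_
      push_cast; ring
    have hne : (1 + ((x0+0*d0)^2+(x1+0*d1)^2+(x2+0*d2)^2))^2 ≠ 0 := by positivity
    have h2 := h1.inv (by simpa using hne)
    refine h2.congr_deriv ?_
    simp
    try ring
  have hL : HasDerivAt (fun t : ℝ => w0*(x0+t*d0)+w1*(x1+t*d1)+w2*(x2+t*d2))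
      (w0*d0+w1*d1+w2*d2) 0 := by
    exact (((lin_hasDeriv x0 d0).const_mul w0).add ((lin_hasDeriv x1 d1).const_mul w1)).add
      ((lin_hasDeriv x2 d2).const_mul w2)
  have hA : HasDerivAt (fun t : ℝ =>
      (1 - ((x0+t*d0)^2+(x1+t*d1)^2+(x2+t*d2)^2)) * wj
        + 2 * (w0*(x0+t*d0)+w1*(x1+t*d1)+w2*(x2+t*d2)) * (xj+t*dj)
        + 2 * (a*(xa+t*da) - b*(xb+t*db)))
      ((-(2*(x0*d0+x1*d1+x2*d2)))*wj + 2*((w0*d0+w1*d1+w2*d2)*xj + (w0*x0+w1*x1+w2*x2)*dj)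
        + 2*(a*da - b*db)) 0 := by
    have h1 := ((hQ.const_sub 1).mul_const wj)
    have h2 := ((hL.const_mul 2).mul (lin_hasDeriv xj dj))
    have h3 := (((lin_hasDeriv xa da).const_mul a).sub ((lin_hasDeriv xb db).const_mul b)).const_mul 2
    have h := (h1.add h2).add h3
    refine h.congr_deriv ?_
    simp
    try ring
  have h := (hden.const_mul 3).mul hA
  refine h.congr_deriv ?_
  norm_num

lemma pd_eq_of_hasDeriv {f : E3 → ℝ} {x : E3} (hf : DifferentiableAt ℝ f x) (i : Fin 3) {D : ℝ}
    (h : HasDerivAt (fun t : ℝ => f (x + t • EuclideanSpace.single i 1)) D 0) :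
    pd i f x = D := by
  have h1 : HasDerivAt (fun t : ℝ => x + t • EuclideanSpace.single i 1)
      (EuclideanSpace.single i 1) 0 := by
    simpa using ((hasDerivAt_id (0:ℝ)).smul_const (EuclideanSpace.single i 1)).const_add x
  have hx : x + (0:ℝ) • EuclideanSpace.single i 1 = x := by simp
  have h2 := HasFDerivAt.comp_hasDerivAt 0 (by rw [hx]; exact hf.hasFDerivAt) h1
  exact h2.unique h

lemma pd_uLY (w x : E3) (i j : Fin 3) :
    pd i (fun y => uLY w y j) x =
      3 * (-(2*(1+(x 0^2+x 1^2+x 2^2))*(2*(x 0*EuclideanSpace.single i 1 0+x 1*EuclideanSpace.single i 1 1+x 2*EuclideanSpace.single i 1 2))) / ((1+(x 0^2+x 1^2+x 2^2))^2)^2)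
          * ((1-(x 0^2+x 1^2+x 2^2))*w j + 2*(w 0*x 0+w 1*x 1+w 2*x 2)*x j
            + 2*(w (j+1)*x (j+2)-w (j+2)*x (j+1)))
        + 3 * ((1+(x 0^2+x 1^2+x 2^2))^2)⁻¹
          * ((-(2*(x 0*EuclideanSpace.single i 1 0+x 1*EuclideanSpace.single i 1 1+x 2*EuclideanSpace.single i 1 2)))*w j
            + 2*((w 0*EuclideanSpace.single i 1 0+w 1*EuclideanSpace.single i 1 1+w 2*EuclideanSpace.single i 1 2)*x j
              + (w 0*x 0+w 1*x 1+w 2*x 2)*(EuclideanSpace.single i 1 j))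
            + 2*(w (j+1)*(EuclideanSpace.single i 1 (j+2)) - w (j+2)*(EuclideanSpace.single i 1 (j+1)))) := by
  apply pd_eq_of_hasDeriv (uLY_diff w x j) i
  have h := master (x 0) (x 1) (x 2) (EuclideanSpace.single i 1 0) (EuclideanSpace.single i 1 1)
    (EuclideanSpace.single i 1 2) (w 0) (w 1) (w 2) (w j) (x j) (EuclideanSpace.single i 1 j)
    (w (j+1)) (x (j+2)) (EuclideanSpace.single i 1 (j+2)) (w (j+2)) (x (j+1))
    (EuclideanSpace.single i 1 (j+1))
  convert h using 1
  funext t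
  rw [uLY_coord]
  simp only [PiLp.add_apply, PiLp.smul_apply, smul_eq_mul]

set_option maxHeartbeats 1000000 in
/-- `∇×u(x) = 4(1+|x|²)⁻¹ u(x)` for the Loss–Yau field. -/
theorem curl_uLY (w : E3) (x : E3) :
    curl (uLY w) x = (4 * (1 + ‖x‖ ^ 2)⁻¹) • uLY w x := by
  have hpos : (0:ℝ) < 1 + (x 0^2+x 1^2+x 2^2) := by positivity
  have hne : (1:ℝ) + (x 0^2+x 1^2+x 2^2) ≠ 0 := ne_of_gt hpos
  ext k
  fin_cases k
  · show curl (uLY w) x 0 = ((4 * (1 + ‖x‖ ^ 2)⁻¹) • uLY w x) 0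
    simp only [curl, toE3_apply, Matrix.cons_val_zero, Matrix.cons_val_one, Matrix.head_cons,
      Matrix.cons_val_two, Matrix.tail_cons]
    rw [pd_uLY, pd_uLY]
    simp only [PiLp.smul_apply, smul_eq_mul, normsq_eq, uLY_coord,
      EuclideanSpace.single_apply]
    simp only [Fin.reduceAdd, Fin.reduceEq, reduceIte, mul_zero, zero_mul, mul_one, one_mul,
      add_zero, zero_add, sub_zero, zero_sub, mul_neg, neg_zero]
    field_simp
    ring
  · show curl (uLY w) x 1 = ((4 * (1 + ‖x‖ ^ 2)⁻¹) • uLY w x) 1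
    simp only [curl, toE3_apply, Matrix.cons_val_zero, Matrix.cons_val_one, Matrix.head_cons,
      Matrix.cons_val_two, Matrix.tail_cons]
    rw [pd_uLY, pd_uLY]
    simp only [PiLp.smul_apply, smul_eq_mul, normsq_eq, uLY_coord,
      EuclideanSpace.single_apply]
    simp only [Fin.reduceAdd, Fin.reduceEq, reduceIte, mul_zero, zero_mul, mul_one, one_mul,
      add_zero, zero_add, sub_zero, zero_sub, mul_neg, neg_zero]
    field_simp
    ring
  · show curl (uLY w) x 2 = ((4 * (1 + ‖x‖ ^ 2)⁻¹) • uLY w x) 2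
    simp only [curl, toE3_apply, Matrix.cons_val_zero, Matrix.cons_val_one, Matrix.head_cons,
      Matrix.cons_val_two, Matrix.tail_cons]
    rw [pd_uLY, pd_uLY]
    simp only [PiLp.smul_apply, smul_eq_mul, normsq_eq, uLY_coord,
      EuclideanSpace.single_apply]
    simp only [Fin.reduceAdd, Fin.reduceEq, reduceIte, mul_zero, zero_mul, mul_one, one_mul,
      add_zero, zero_add, sub_zero, zero_sub, mul_neg, neg_zero]
    field_simp
    ring
end
end

section
/- Let w ∈ ℝ³ be a constant vector and define u : ℝ³ → ℝ³ by u(x) = 3(1+|x|²)^{-2}((1-|x|²)w + 2(w·x)x + 2 w×x). Then |u(x)| = 3(1+|x|²)^{-1}|w| for all x ∈ ℝ³. -/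
noncomputable section
open MeasureTheory Real
open scoped BigOperators

lemma normsq_aux (v : E3) : ‖v‖ ^ 2 = ∑ i, v i ^ 2 := by
  simp [EuclideanSpace.norm_eq, Real.sq_sqrt, Finset.sum_nonneg (fun i _ => sq_nonneg (v i))]

/-- `|u(x)| = 3(1+|x|²)⁻¹ |w|` for the Loss–Yau field. -/
theorem norm_uLY (w : E3) (x : E3) :
    ‖uLY w x‖ = 3 * (1 + ‖x‖ ^ 2)⁻¹ * ‖w‖ := by
  have hr : (0:ℝ) < 1 + ‖x‖ ^ 2 := by positivity
  have key : ‖(1 - ‖x‖ ^ 2) • w + (2 * ip w x) • x + (2 : ℝ) • cross3 w x‖ ^ 2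
      = ((1 + ‖x‖ ^ 2) * ‖w‖) ^ 2 := by
    rw [mul_pow, normsq_aux w, normsq_aux, normsq_aux x]
    simp only [PiLp.add_apply, PiLp.smul_apply, smul_eq_mul, cross3, toE3, ip,
      PiLp.inner_apply, RCLike.inner_apply, conj_trivial, WithLp.equiv_symm_apply, PiLp.toLp_apply,
      WithLp.equiv_apply, cross_apply, normsq_aux x, Fin.sum_univ_three]
    simp only [Matrix.cons_val_zero, Matrix.cons_val_one, Matrix.head_cons,
      Matrix.cons_val_two, Matrix.tail_cons]
    ring
  have hnorm : ‖(1 - ‖x‖ ^ 2) • w + (2 * ip w x) • x + (2 : ℝ) • cross3 w x‖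
      = (1 + ‖x‖ ^ 2) * ‖w‖ := by
    have h1 : (0:ℝ) ≤ ‖(1 - ‖x‖ ^ 2) • w + (2 * ip w x) • x + (2 : ℝ) • cross3 w x‖ :=
      norm_nonneg _
    have h2 : (0:ℝ) ≤ (1 + ‖x‖ ^ 2) * ‖w‖ := by positivity
    nlinarith [key]
  rw [uLY, norm_smul, hnorm, Real.norm_eq_abs]
  rw [abs_of_pos (by positivity)]
  field_simp
end
end

section
/- Let v : ℝ³ → ℝ³ be differentiable with v(x) ≠ 0 for all x, and write v = |v| e₀ where e₀ = v/|v|. If |∇|v|(x)| = |∇v(x)| for all x (Frobenius norm on the right), then ∇e₀ = 0 everywhere; hence if ℝ³ is connected and e₀ is C¹, e₀ is a constant unit vector and v = |v| e₀ for a fixed e₀ ∈ S². -/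
noncomputable section
open MeasureTheory Real
open scoped BigOperators
open scoped RealInnerProductSpace

lemma hasFDerivAt_norm' {f : E3 → E3} {D : E3 →L[ℝ] E3} {x : E3}
    (hf : HasFDerivAt f D x) (h0 : f x ≠ 0) :
    HasFDerivAt (fun y => ‖f y‖) (‖f x‖⁻¹ • ((innerSL ℝ (f x)).comp D)) x := by
  have h1 : HasFDerivAt (fun y => ‖f y‖ ^ 2) (2 • (innerSL ℝ (f x)).comp D) x := hf.norm_sq
  have hpos : (0:ℝ) < ‖f x‖ := norm_pos_iff.2 h0
  have h2 := h1.sqrt (by positivity)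
  have h3 : (fun y => Real.sqrt (‖f y‖ ^ 2)) = fun y => ‖f y‖ := by
    funext y; exact Real.sqrt_sq (norm_nonneg _)
  rw [h3] at h2
  refine h2.congr_fderiv ?_; symm
  rw [Real.sqrt_sq (norm_nonneg _)]
  ext w
  simp only [ContinuousLinearMap.smul_apply, ContinuousLinearMap.coe_smul', Pi.smul_apply,
    smul_eq_mul]
  field_simp; ring


/-- If `v` is a nowhere-vanishing `C¹` field with `|∇|v|| = |∇v|` everywhere (Frobenius
norm), then `e₀ = v/|v|` has vanishing derivative and is a constant unit vector, so
`v = |v| e₀` for a fixed `e₀ ∈ S²`. -/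
theorem direction_constant (v : E3 → E3) (hv : ContDiff ℝ 1 v) (hne : ∀ x, v x ≠ 0)
    (heq : ∀ x, ∑ i : Fin 3, (pd i (fun y => ‖v y‖) x) ^ 2 = jacNormSq v x) :
    (∀ x, fderiv ℝ (fun y => ‖v y‖⁻¹ • v y) x = 0) ∧
      ∃ c : E3, ‖c‖ = 1 ∧ ∀ x, v x = ‖v x‖ • c := by
  have hvd : Differentiable ℝ v := hv.differentiable one_ne_zero
  have hgd : Differentiable ℝ (fun y => ‖v y‖⁻¹ • v y) := by
    intro x
    exact (((hvd x).norm ℝ (hne x)).inv (norm_ne_zero_iff.2 (hne x))).smul (hvd x)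
  have key : ∀ x, fderiv ℝ (fun y => ‖v y‖⁻¹ • v y) x = 0 := by
    intro x
    set a : E3 := v x with ha
    set D : E3 →L[ℝ] E3 := fderiv ℝ v x with hDdef
    have hvD : HasFDerivAt v D x := (hvd x).hasFDerivAt
    have ha0 : a ≠ 0 := hne x
    have hna : ‖a‖ ≠ 0 := norm_ne_zero_iff.2 ha0
    set b : Fin 3 → E3 := fun i => D (EuclideanSpace.single i 1) with hb
    have hnorm : HasFDerivAt (fun y => ‖v y‖) (‖a‖⁻¹ • ((innerSL ℝ a).comp D)) x :=
      hasFDerivAt_norm' hvD ha0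
    have hpdn : ∀ i : Fin 3, pd i (fun y => ‖v y‖) x = ‖a‖⁻¹ * ⟪a, b i⟫ := by
      intro i
      rw [pd, hnorm.fderiv]
      simp [hb]
    have hpdc : ∀ i j, pd i (fun y => v y j) x = b i j := by
      intro i j
      have h : HasFDerivAt (fun y => v y j)
          ((EuclideanSpace.proj j : E3 →L[ℝ] ℝ).comp D) x :=
        (EuclideanSpace.proj (𝕜 := ℝ) j).hasFDerivAt.comp x hvD
      rw [pd, h.fderiv]
      rfl
    have hsum : ∀ i, ∑ j, (b i j) ^ 2 = ‖b i‖ ^ 2 := by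
      intro i
      rw [EuclideanSpace.norm_eq, Real.sq_sqrt (by positivity)]; simp [Real.norm_eq_abs, sq_abs]
    -- rewrite hypothesis
    have heqx : ∑ i : Fin 3, (‖a‖⁻¹ * ⟪a, b i⟫) ^ 2 = ∑ i : Fin 3, ‖b i‖ ^ 2 := by
      have := heq x
      simp only [jacNormSq] at this
      calc ∑ i : Fin 3, (‖a‖⁻¹ * ⟪a, b i⟫) ^ 2
          = ∑ i : Fin 3, (pd i (fun y => ‖v y‖) x) ^ 2 := by
            refine Finset.sum_congr rfl fun i _ => ?_; rw [hpdn]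
        _ = ∑ i : Fin 3, ∑ j : Fin 3, (pd i (fun y => v y j) x) ^ 2 := this
        _ = ∑ i : Fin 3, ‖b i‖ ^ 2 := by
            refine Finset.sum_congr rfl fun i _ => ?_
            rw [← hsum]
            exact Finset.sum_congr rfl fun j _ => by rw [hpdc]
    -- Cauchy-Schwarz termwise
    have hCS : ∀ i : Fin 3, (‖a‖⁻¹ * ⟪a, b i⟫) ^ 2 ≤ ‖b i‖ ^ 2 := by
      intro i
      have h1 : |⟪a, b i⟫| ≤ ‖a‖ * ‖b i‖ := abs_real_inner_le_norm a (b i)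
      have h2 : ⟪a, b i⟫ ^ 2 ≤ (‖a‖ * ‖b i‖) ^ 2 := by
        rw [← sq_abs]; exact pow_le_pow_left₀ (abs_nonneg _) h1 2
      have hpos : (0:ℝ) < ‖a‖ := norm_pos_iff.2 ha0
      rw [mul_pow]
      calc ‖a‖⁻¹ ^ 2 * ⟪a, b i⟫ ^ 2 ≤ ‖a‖⁻¹ ^ 2 * (‖a‖ * ‖b i‖) ^ 2 := by
            exact mul_le_mul_of_nonneg_left h2 (by positivity)
        _ = ‖b i‖ ^ 2 := by field_simp
    have heach : ∀ i : Fin 3, (‖a‖⁻¹ * ⟪a, b i⟫) ^ 2 = ‖b i‖ ^ 2 := by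
      intro i
      have := (Finset.sum_eq_sum_iff_of_le (fun i _ => hCS i)).1 heqx i (Finset.mem_univ i)
      exact this
    -- get the multipliers
    have hmul : ∀ i : Fin 3, ∃ r : ℝ, b i = r • a := by
      intro i
      by_cases h0 : b i = 0
      · exact ⟨0, by simp [h0]⟩
      have h1 : ⟪a, b i⟫ ^ 2 = (‖a‖ * ‖b i‖) ^ 2 := by
        have := heach i
        field_simp at this ⊢
        nlinarith [this]
      have h2 : |⟪a, b i⟫| = ‖a‖ * ‖b i‖ := by
        rw [← Real.sqrt_sq_eq_abs, h1, Real.sqrt_sq (by positivity)]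
      have h3 : ‖⟪a, b i⟫‖ = ‖a‖ * ‖b i‖ := by rwa [Real.norm_eq_abs]
      obtain ⟨r, -, hr⟩ := (norm_inner_eq_norm_iff ha0 h0).1 h3
      exact ⟨r, hr⟩
    choose lam hlam using hmul
    -- derivative of inverse norm
    have hinv : HasFDerivAt (fun y => ‖v y‖⁻¹)
        ((-(‖a‖ ^ 2)⁻¹) • (‖a‖⁻¹ • ((innerSL ℝ a).comp D))) x :=
      (hasDerivAt_inv hna).comp_hasFDerivAt x hnorm
    have hg : HasFDerivAt (fun y => ‖v y‖⁻¹ • v y)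
        (‖a‖⁻¹ • D + (-(‖a‖ ^ 2)⁻¹ • (‖a‖⁻¹ • ((innerSL ℝ a).comp D))).smulRight a) x :=
      hinv.smul hvD
    rw [hg.fderiv]
    apply ContinuousLinearMap.coe_injective
    apply Module.Basis.ext (EuclideanSpace.basisFun (Fin 3) ℝ).toBasis
    intro i
    have hbfa : ((EuclideanSpace.basisFun (Fin 3) ℝ).toBasis : _) i = EuclideanSpace.single i 1 := by
      simp [EuclideanSpace.basisFun_apply]
    rw [hbfa]
    have hDi : D (EuclideanSpace.single i 1) = lam i • a := hlam i
    have hinner : ⟪a, lam i • a⟫ = lam i * ‖a‖ ^ 2 := by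
      rw [real_inner_smul_right, real_inner_self_eq_norm_sq]
    simp only [ContinuousLinearMap.coe_coe, ContinuousLinearMap.add_apply,
      ContinuousLinearMap.coe_smul', Pi.smul_apply, ContinuousLinearMap.smulRight_apply,
      ContinuousLinearMap.smul_apply, ContinuousLinearMap.coe_comp', Function.comp_apply,
      innerSL_apply_apply, ContinuousLinearMap.zero_apply]
    rw [hDi, hinner]
    rw [smul_smul, smul_eq_mul, ← add_smul]
    convert zero_smul ℝ a using 2
    field_simp
    ring
    field_simp
    ring
  refine ⟨key, ?_⟩
  set g : E3 → E3 := fun y => ‖v y‖⁻¹ • v y with hgdef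
  have hconst : ∀ x, g x = g 0 := fun x => is_const_of_fderiv_eq_zero hgd key x 0
  refine ⟨g 0, ?_, ?_⟩
  · rw [hgdef]
    simp only [norm_smul, norm_inv, norm_norm]
    exact inv_mul_cancel₀ (norm_ne_zero_iff.2 (hne 0))
  · intro x
    rw [← hconst x, hgdef]
    simp only [smul_smul]
    rw [mul_inv_cancel₀ (norm_ne_zero_iff.2 (hne x)), one_smul]
end
end
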